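/- Let (G,+) be an abelian group, let F be a proper subgroup of G, and let 𝓕 ⊆ G be a set such that for every subset S ⊆ G with #S ≤ 2·#F there exists φ ∈ G with φ + S ⊆ 𝓕 (i.e., the additivity of 𝓕 exceeds 2·#F). Then there exists g ∈ 𝓕 with g ∉ F such that g + F ⊆ 𝓕; in particular, some coset of F different from F itself is contained in 𝓕. -/

import Mathlib

open Cardinal

/-- **Lemma 2.1.** Let `(G,+)` be an abelian group, `F` a proper subgroup of `G`, and
`𝓕 ⊆ G` such that every subset `S ⊆ G` with `#S ≤ 2·#F` admits a translate into `𝓕`.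
Then some coset of `F` different from `F` itself is contained in `𝓕`. -/
theorem coset_in_family_of_additivity_gt {G : Type*} [AddCommGroup G]
    (F : AddSubgroup G) (hF : F ≠ ⊤) (𝓕 : Set G)
    (hadd : ∀ S : Set G, #S ≤ 2 * #F → ∃ φ : G, (fun s => φ + s) '' S ⊆ 𝓕) :
    ∃ g ∈ 𝓕, g ∉ F ∧ (fun x => g + x) '' (F : Set G) ⊆ 𝓕 := by
  obtain ⟨x, hx⟩ : ∃ x : G, x ∉ F := by
    by_contra h
    push_neg at h
    exact hF (AddSubgroup.eq_top_iff' F |>.mpr h)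
  set S : Set G := (F : Set G) ∪ (fun y => x + y) '' (F : Set G) with hS
  have hcard : #S ≤ 2 * #F := by
    have h1 : #((fun y => x + y) '' (F : Set G)) = #(F : Set G) :=
      Cardinal.mk_image_eq (add_right_injective x)
    calc #S ≤ #(F : Set G) + #((fun y => x + y) '' (F : Set G)) := Cardinal.mk_union_le _ _
      _ = #(F : Set G) + #(F : Set G) := by rw [h1]
      _ = 2 * #F := by rw [two_mul]; rfl
  obtain ⟨φ, hφ⟩ := hadd S hcard
  have hφF : (fun y => (φ : G) + y) '' (F : Set G) ⊆ 𝓕 := fun z hz =>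
    hφ (Set.image_mono (f := fun y => (φ : G) + y) Set.subset_union_left hz)
  have hφxF : (fun y => (φ + x : G) + y) '' (F : Set G) ⊆ 𝓕 := by
    rintro z ⟨y, hy, rfl⟩
    refine hφ ⟨x + y, Or.inr ⟨y, hy, rfl⟩, ?_⟩
    simp [add_assoc]
  by_cases hφmem : φ ∈ F
  · refine ⟨φ + x, ?_, ?_, hφxF⟩
    · have : (φ + x : G) + 0 ∈ 𝓕 := hφxF ⟨0, F.zero_mem, rfl⟩
      simpa using this
    · intro h
      exact hx (by simpa using F.sub_mem h hφmem)
  · refine ⟨φ, ?_, hφmem, hφF⟩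
    have : (φ : G) + 0 ∈ 𝓕 := hφF ⟨0, F.zero_mem, rfl⟩
    simpa using this
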